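/- (Truthfulness of BTR via critical values, buyer side.) In the BTR mechanism, a trading buyer's payment equals her critical value for trading: if the efficient trade size is q and b^(q+1) ≥ s^(q), each of the top q buyers trades and would continue to trade with any bid strictly above b^(q+1), and would not trade with any bid strictly below b^(q+1); if b^(q+1) < s^(q), each of the top q-1 buyers trades and her critical value is b^(q). -/

import Mathlib

/-- The multiset of values of the bid vector `v`, sorted ascendingly. -/
noncomputable def ascVals {n : ℕ} (v : Fin n → ℝ) : List ℝ :=
  (Finset.univ.val.map v).sort (· ≤ ·)

/-- The `(j+1)`-st lowest seller bid (`s^(j+1)` in 1-indexed notation). -/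
noncomputable def sVal {n : ℕ} (s : Fin n → ℝ) (j : ℕ) : ℝ :=
  (ascVals s).getD j 0

/-- The `(j+1)`-st highest buyer bid (`b^(j+1)` in 1-indexed notation). -/
noncomputable def bVal {n : ℕ} (b : Fin n → ℝ) (j : ℕ) : ℝ :=
  (ascVals b).getD (n - 1 - j) 0

/-- The efficient trade size: the number of indices `j` with `b^(j) ≥ s^(j)` (ties in favor of
buyers). -/
noncomputable def tradeSize {nS nB : ℕ} (s : Fin nS → ℝ) (b : Fin nB → ℝ) : ℕ :=
  ((Finset.range (min nS nB)).filter fun j => sVal s j ≤ bVal b j).card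

/-- The number of buyers bidding ahead of buyer `i` (higher bid, or equal bid with smaller
ID). -/
noncomputable def buyerRank {n : ℕ} (b : Fin n → ℝ) (i : Fin n) : ℕ :=
  (Finset.univ.filter fun j => b i < b j ∨ (b j = b i ∧ j < i)).card

/-- Whether buyer `i` trades in the BTR mechanism on bids `(s, b)`: the top `q` buyers trade if
`b^(q+1)` exists and `b^(q+1) ≥ s^(q)`, and otherwise only the top `q-1` buyers trade. -/
noncomputable def buyerTrades {nS nB : ℕ} (s : Fin nS → ℝ) (b : Fin nB → ℝ)
    (i : Fin nB) : Prop :=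
  if tradeSize s b < nB ∧ sVal s (tradeSize s b - 1) ≤ bVal b (tradeSize s b) then
    buyerRank b i < tradeSize s b
  else
    buyerRank b i < tradeSize s b - 1

namespace BTRaux

noncomputable def cntGE {n : ℕ} (v : Fin n → ℝ) (t : ℝ) : ℕ :=
  (Finset.univ.filter fun j => t ≤ v j).card

noncomputable def cntGT {n : ℕ} (v : Fin n → ℝ) (t : ℝ) : ℕ :=
  (Finset.univ.filter fun j => t < v j).card

lemma ascVals_length {n : ℕ} (v : Fin n → ℝ) : (ascVals v).length = n := by
  simp [ascVals]

lemma ascVals_sorted {n : ℕ} (v : Fin n → ℝ) : (ascVals v).Pairwise (· ≤ ·) :=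
  Multiset.pairwise_sort _ _

lemma countP_ascVals {n : ℕ} (v : Fin n → ℝ) (p : ℝ → Prop) [DecidablePred p] :
    (ascVals v).countP (fun a => decide (p a)) = (Finset.univ.filter fun j => p (v j)).card := by
  show ((ascVals v : List ℝ) : Multiset ℝ).countP p = _
  rw [ascVals, Multiset.sort_eq, Multiset.countP_map]
  simp [Finset.filter, Finset.card]

lemma sorted_stat (L : List ℝ) (hL : L.Pairwise (· ≤ ·)) (k : ℕ) (hk : k < L.length)
    (p : ℝ → Bool) (hp : ∀ a c : ℝ, a ≤ c → p a → p c) :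
    p (L.getD k 0) ↔ L.length - k ≤ L.countP p := by
  have hget : L.getD k 0 = L.get ⟨k, hk⟩ := by
    rw [List.getD_eq_getElem _ _ hk]; rfl
  constructor
  · intro hpk
    have h1 : L.countP p = (L.take k).countP p + (L.drop k).countP p := by
      conv_lhs => rw [← List.take_append_drop k L]
      rw [List.countP_append]
    have h2 : (L.drop k).countP p = (L.drop k).length := by
      rw [List.countP_eq_length]
      intro y hy
      obtain ⟨m, hm, rfl⟩ := List.mem_iff_get.mp hy
      have : L.get ⟨k, hk⟩ ≤ (L.drop k).get m := by
        rw [List.get_eq_getElem, List.get_eq_getElem, List.getElem_drop]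
        exact hL.rel_get_of_le (by simp [Fin.le_def])
      exact hp _ _ this (by rwa [hget] at hpk)
    rw [h1, h2, List.length_drop]
    omega
  · intro hcnt
    by_contra hpk
    have h1 : L.countP p = (L.take (k+1)).countP p + (L.drop (k+1)).countP p := by
      conv_lhs => rw [← List.take_append_drop (k+1) L]
      rw [List.countP_append]
    have h2 : (L.take (k+1)).countP p = 0 := by
      rw [List.countP_eq_zero]
      intro y hy
      obtain ⟨m, hm, rfl⟩ := List.mem_iff_get.mp hy
      have hmlt : (m : ℕ) < k + 1 := lt_of_lt_of_le m.isLt (by simp [List.length_take])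
      have hle : (L.take (k+1)).get m ≤ L.get ⟨k, hk⟩ := by
        rw [List.get_eq_getElem, List.get_eq_getElem, List.getElem_take]
        exact hL.rel_get_of_le (by simp [Fin.le_def]; omega)
      intro hpy
      exact hpk (by rw [hget]; exact hp _ _ hle hpy)
    have h3 : (L.drop (k+1)).countP p ≤ L.length - (k+1) := by
      simpa using List.countP_le_length (l := L.drop (k+1)) (p := p)
    omega

/-- characterization of bVal via cntGE -/
lemma le_bVal_iff {n : ℕ} (v : Fin n → ℝ) {j : ℕ} (hj : j < n) (t : ℝ) :
    t ≤ bVal v j ↔ j < cntGE v t := by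
  have hk : n - 1 - j < (ascVals v).length := by rw [ascVals_length]; omega
  have := sorted_stat (ascVals v) (ascVals_sorted v) (n - 1 - j) hk
      (fun a => decide (t ≤ a)) (fun a c hac ha => by
        simp only [decide_eq_true_eq] at *; exact le_trans ha hac)
  rw [bVal]
  rw [show (ascVals v).countP (fun a => decide (t ≤ a))
      = (Finset.univ.filter fun j => t ≤ v j).card from countP_ascVals v _] at this
  simp only [decide_eq_true_eq, ascVals_length] at this
  rw [this, cntGE]
  omega

lemma lt_bVal_iff {n : ℕ} (v : Fin n → ℝ) {j : ℕ} (hj : j < n) (t : ℝ) :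
    t < bVal v j ↔ j < cntGT v t := by
  have hk : n - 1 - j < (ascVals v).length := by rw [ascVals_length]; omega
  have := sorted_stat (ascVals v) (ascVals_sorted v) (n - 1 - j) hk
      (fun a => decide (t < a)) (fun a c hac ha => by
        simp only [decide_eq_true_eq] at *; exact lt_of_lt_of_le ha hac)
  rw [bVal]
  rw [show (ascVals v).countP (fun a => decide (t < a))
      = (Finset.univ.filter fun j => t < v j).card from countP_ascVals v _] at this
  simp only [decide_eq_true_eq, ascVals_length] at this
  rw [this, cntGT]
  omega

lemma sVal_mono {n : ℕ} (s : Fin n → ℝ) {j k : ℕ} (hjk : j ≤ k) (hk : k < n) :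
    sVal s j ≤ sVal s k := by
  have hj' : j < (ascVals s).length := by rw [ascVals_length]; omega
  have hk' : k < (ascVals s).length := by rw [ascVals_length]; omega
  rw [sVal, sVal, List.getD_eq_getElem _ _ hj', List.getD_eq_getElem _ _ hk']
  exact (ascVals_sorted s).rel_get_of_le (a := ⟨j, hj'⟩) (b := ⟨k, hk'⟩) hjk

lemma cntGE_anti {n : ℕ} (v : Fin n → ℝ) {t t' : ℝ} (h : t ≤ t') :
    cntGE v t' ≤ cntGE v t := by
  apply Finset.card_le_card
  intro j hj; simp only [Finset.mem_filter, Finset.mem_univ, true_and] at *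
  exact le_trans h hj

lemma cntGE_le_cntGT {n : ℕ} (v : Fin n → ℝ) {t t' : ℝ} (h : t < t') :
    cntGE v t' ≤ cntGT v t := by
  apply Finset.card_le_card
  intro j hj; simp only [Finset.mem_filter, Finset.mem_univ, true_and] at *
  exact lt_of_lt_of_le h hj

lemma cntGT_le_cntGE {n : ℕ} (v : Fin n → ℝ) (t : ℝ) : cntGT v t ≤ cntGE v t := by
  apply Finset.card_le_card
  intro j hj; simp only [Finset.mem_filter, Finset.mem_univ, true_and] at *
  exact le_of_lt hj

end BTRaux

namespace BTRaux

open Finset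

lemma card_filter_split {n : ℕ} (i : Fin n) (p : Fin n → Prop) [DecidablePred p] :
    (univ.filter p).card = ((univ.erase i).filter p).card + (if p i then 1 else 0) := by
  by_cases hpi : p i
  · rw [if_pos hpi]
    have : (univ.erase i).filter p = (univ.filter p).erase i := by
      ext j
      simp only [mem_filter, mem_erase, mem_univ, true_and]
      tauto
    rw [this, card_erase_of_mem (by simp [hpi])]
    have : 0 < (univ.filter p).card := card_pos.mpr ⟨i, by simp [hpi]⟩
    omega
  · rw [if_neg hpi, add_zero]
    apply congrArg
    ext j
    simp only [mem_filter, mem_erase, mem_univ, true_and]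
    constructor
    · intro hj
      refine ⟨⟨fun hji => hpi (hji ▸ hj), trivial⟩, hj⟩
    · rintro ⟨_, hj⟩; exact hj

lemma cntGE_update {n : ℕ} (v : Fin n → ℝ) (i : Fin n) (β t : ℝ) :
    cntGE (Function.update v i β) t + (if t ≤ v i then 1 else 0)
      = cntGE v t + (if t ≤ β then 1 else 0) := by
  rw [cntGE, cntGE, card_filter_split i (fun j => t ≤ Function.update v i β j),
    card_filter_split i (fun j => t ≤ v j)]
  have he : (univ.erase i).filter (fun j => t ≤ Function.update v i β j)
      = (univ.erase i).filter (fun j => t ≤ v j) := by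
    apply filter_congr
    intro j hj
    rw [Function.update_of_ne (mem_erase.mp hj).1]
  rw [he, Function.update_self]
  omega

lemma cntGT_update {n : ℕ} (v : Fin n → ℝ) (i : Fin n) (β t : ℝ) :
    cntGT (Function.update v i β) t + (if t < v i then 1 else 0)
      = cntGT v t + (if t < β then 1 else 0) := by
  rw [cntGT, cntGT, card_filter_split i (fun j => t < Function.update v i β j),
    card_filter_split i (fun j => t < v j)]
  have he : (univ.erase i).filter (fun j => t < Function.update v i β j)
      = (univ.erase i).filter (fun j => t < v j) := by
    apply filter_congr
    intro j hj
    rw [Function.update_of_ne (mem_erase.mp hj).1]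
  rw [he, Function.update_self]
  omega

lemma rank_lt_cntGE {n : ℕ} (v : Fin n → ℝ) (i : Fin n) :
    buyerRank v i < cntGE v (v i) := by
  have hsub : (univ.filter fun j => v i < v j ∨ (v j = v i ∧ j < i))
      ⊆ (univ.filter fun j => v i ≤ v j).erase i := by
    intro j hj
    simp only [mem_filter, mem_erase, mem_univ, true_and] at *
    constructor
    · rintro rfl
      rcases hj with h | ⟨_, h⟩
      · exact absurd h (lt_irrefl _)
      · exact absurd h (lt_irrefl _)
    · rcases hj with h | ⟨h, _⟩
      · exact le_of_lt h
      · exact le_of_eq h.symm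
  calc buyerRank v i ≤ ((univ.filter fun j => v i ≤ v j).erase i).card :=
        card_le_card hsub
    _ < cntGE v (v i) := card_erase_lt_of_mem (by simp)

lemma cntGT_le_rank {n : ℕ} (v : Fin n → ℝ) (i : Fin n) :
    cntGT v (v i) ≤ buyerRank v i := by
  apply card_le_card
  intro j hj
  simp only [mem_filter, mem_univ, true_and] at *
  exact Or.inl hj

lemma filter_range_card {m c : ℕ} (P : ℕ → Prop) [DecidablePred P] (hc : c ≤ m)
    (h1 : ∀ j < c, P j) (h2 : ∀ j, c ≤ j → j < m → ¬ P j) :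
    ((Finset.range m).filter P).card = c := by
  have : (Finset.range m).filter P = Finset.range c := by
    ext j
    simp only [mem_filter, mem_range]
    constructor
    · rintro ⟨hjm, hPj⟩
      by_contra h
      exact h2 j (le_of_not_gt h) hjm hPj
    · intro hj
      exact ⟨lt_of_lt_of_le hj hc, h1 j hj⟩
  rw [this, card_range]

/-- the predicate `sVal s j ≤ bVal b j` is downward closed on `range (min nS nB)` -/
lemma dc {nS nB : ℕ} (s : Fin nS → ℝ) (b : Fin nB → ℝ) {j k : ℕ} (hjk : j ≤ k)
    (hk : k < min nS nB) (hP : sVal s k ≤ bVal b k) : sVal s j ≤ bVal b j := by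
  have h1 : sVal s j ≤ sVal s k := sVal_mono s hjk (by omega)
  have hkB : k < nB := by omega
  have hjB : j < nB := by omega
  have h2 : bVal b k ≤ bVal b j := by
    rw [le_bVal_iff b hjB]
    have := (le_bVal_iff b hkB (bVal b k)).mp le_rfl
    omega
  linarith

lemma tradeSize_le {nS nB : ℕ} (s : Fin nS → ℝ) (b : Fin nB → ℝ) :
    tradeSize s b ≤ min nS nB := by
  rw [tradeSize]
  calc _ ≤ (Finset.range (min nS nB)).card := card_le_card (filter_subset _ _)
    _ = min nS nB := card_range _

lemma tradeSize_spec_lt {nS nB : ℕ} (s : Fin nS → ℝ) (b : Fin nB → ℝ) :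
    ∀ j < tradeSize s b, sVal s j ≤ bVal b j := by
  intro j hj
  by_contra hP
  have hsub : ((Finset.range (min nS nB)).filter fun k => sVal s k ≤ bVal b k)
      ⊆ Finset.range j := by
    intro k hk
    simp only [mem_filter, mem_range] at *
    by_contra hkj
    exact hP (dc s b (le_of_not_gt hkj) hk.1 hk.2)
  have := card_le_card hsub
  rw [card_range] at this
  rw [tradeSize] at hj
  omega

lemma tradeSize_spec_ge {nS nB : ℕ} (s : Fin nS → ℝ) (b : Fin nB → ℝ) :
    ∀ j, tradeSize s b ≤ j → j < min nS nB → ¬ (sVal s j ≤ bVal b j) := by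
  intro j hqj hjm hP
  have hsub : Finset.range (j+1)
      ⊆ ((Finset.range (min nS nB)).filter fun k => sVal s k ≤ bVal b k) := by
    intro k hk
    simp only [mem_filter, mem_range] at *
    exact ⟨by omega, dc s b (by omega) hjm hP⟩
  have := card_le_card hsub
  rw [card_range] at this
  rw [tradeSize] at hqj
  omega

end BTRaux

namespace BTRaux

open Finset

section Main
variable {nS nB : ℕ} (s : Fin nS → ℝ) (b : Fin nB → ℝ)

lemma cnt_le_of_not_trade {j : ℕ} (hjB : j < nB) (hjq : tradeSize s b ≤ j)
    (hjm : j < min nS nB) : cntGE b (sVal s j) ≤ j := by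
  by_contra h
  push_neg at h
  exact tradeSize_spec_ge s b j hjq hjm ((le_bVal_iff b hjB _).mpr h)

end Main

end BTRaux

open BTRaux in
/-- Truthfulness of BTR via critical values, buyer side: if `b^(q+1) ≥ s^(q)` (with `q` the
efficient trade size), each of the top `q` buyers trades, continues to trade with any bid
strictly above `b^(q+1)`, and does not trade with any bid strictly below `b^(q+1)`; if
`b^(q+1) < s^(q)`, each of the top `q-1` buyers trades and her critical value is `b^(q)`. -/
theorem btr_buyer_critical_values (nS nB : ℕ) (s : Fin nS → ℝ) (b : Fin nB → ℝ) :
    ((tradeSize s b < nB ∧ sVal s (tradeSize s b - 1) ≤ bVal b (tradeSize s b)) →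
      ∀ i : Fin nB, buyerRank b i < tradeSize s b →
        buyerTrades s b i
        ∧ (∀ β : ℝ, bVal b (tradeSize s b) < β →
            buyerTrades s (Function.update b i β) i)
        ∧ (∀ β : ℝ, β < bVal b (tradeSize s b) →
            ¬ buyerTrades s (Function.update b i β) i))
    ∧ (¬(tradeSize s b < nB ∧ sVal s (tradeSize s b - 1) ≤ bVal b (tradeSize s b)) →
      ∀ i : Fin nB, buyerRank b i < tradeSize s b - 1 →
        buyerTrades s b i
        ∧ (∀ β : ℝ, bVal b (tradeSize s b - 1) < β →
            buyerTrades s (Function.update b i β) i)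
        ∧ (∀ β : ℝ, β < bVal b (tradeSize s b - 1) →
            ¬ buyerTrades s (Function.update b i β) i)) := by
  have hqm : tradeSize s b ≤ min nS nB := tradeSize_le s b
  have hqS : tradeSize s b ≤ nS := le_trans hqm (min_le_left _ _)
  have hqB : tradeSize s b ≤ nB := le_trans hqm (min_le_right _ _)
  constructor
  · -- CASE 1
    rintro ⟨hqnB, hcv⟩ i hri
    set q := tradeSize s b with hq
    have hq1 : 1 ≤ q := by omega
    set x := b i with hx
    have hrx : cntGT b x ≤ buyerRank b i := cntGT_le_rank b i
    have hxq : cntGT b x < q := lt_of_le_of_lt hrx hri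
    set p := bVal b q with hp
    have hpx : p ≤ x := by
      by_contra h
      push_neg at h
      have := (lt_bVal_iff b hqnB x).mp h
      omega
    have hcntp : q + 1 ≤ cntGE b p := (le_bVal_iff b hqnB p).mp le_rfl
    have hcntp' : cntGT b p ≤ q := by
      by_contra h
      push_neg at h
      exact absurd ((lt_bVal_iff b hqnB p).mpr h) (lt_irrefl p)
    have hsj : ∀ j < q, sVal s j ≤ p := by
      intro j hj
      exact le_trans (sVal_mono s (by omega) (by omega)) hcv
    refine ⟨?_, ?_, ?_⟩
    · rw [buyerTrades, if_pos ⟨hqnB, hcv⟩]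
      exact hri
    · -- raise above p
      intro β hβ
      set b' := Function.update b i β with hb'
      have hb'i : b' i = β := Function.update_self i β b
      have hts' : tradeSize s b' = q := by
        unfold tradeSize
        apply filter_range_card _ hqm
        · intro j hj
          have hjB : j < nB := by omega
          have hsx : sVal s j ≤ x := le_trans (hsj j hj) hpx
          have hsβ : sVal s j ≤ β := le_of_lt (lt_of_le_of_lt (hsj j hj) hβ)
          have hcnt := cntGE_update b i β (sVal s j)
          rw [← hb'] at hcnt
          have hPj := (le_bVal_iff b hjB (sVal s j)).mp (tradeSize_spec_lt s b j hj)
          rw [le_bVal_iff b' hjB]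
          rw [if_pos hsx, if_pos hsβ] at hcnt
          omega
        · intro j hjq hjm
          have hjB : j < nB := by omega
          have hcb : cntGE b (sVal s j) ≤ j := cnt_le_of_not_trade s b hjB hjq hjm
          rw [le_bVal_iff b' hjB]
          have hcnt := cntGE_update b i β (sVal s j)
          rw [← hb'] at hcnt
          by_cases hsx : sVal s j ≤ x
          · rw [if_pos hsx] at hcnt
            by_cases hsβ : sVal s j ≤ β
            · rw [if_pos hsβ] at hcnt; omega
            · rw [if_neg hsβ] at hcnt; omega
          · push_neg at hsx
            have hle : cntGE b (sVal s j) ≤ cntGT b x := cntGE_le_cntGT b hsx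
            rw [if_neg (not_le.mpr hsx)] at hcnt
            by_cases hsβ : sVal s j ≤ β
            · rw [if_pos hsβ] at hcnt; omega
            · rw [if_neg hsβ] at hcnt; omega
      have hcond' : tradeSize s b' < nB
          ∧ sVal s (tradeSize s b' - 1) ≤ bVal b' (tradeSize s b') := by
        rw [hts']
        refine ⟨hqnB, ?_⟩
        rw [le_bVal_iff b' hqnB]
        have h1 : sVal s (q-1) ≤ x := le_trans hcv hpx
        have h2 : sVal s (q-1) ≤ β := le_of_lt (lt_of_le_of_lt hcv hβ)
        have h3 : q < cntGE b (sVal s (q-1)) := (le_bVal_iff b hqnB _).mp hcv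
        have hcnt := cntGE_update b i β (sVal s (q-1))
        rw [← hb'] at hcnt
        rw [if_pos h1, if_pos h2] at hcnt
        omega
      rw [buyerTrades, if_pos hcond', hts']
      have hr' : buyerRank b' i < cntGE b' (b' i) := rank_lt_cntGE b' i
      rw [hb'i] at hr'
      have hcnt := cntGE_update b i β β
      rw [← hb'] at hcnt
      rw [if_pos (le_refl β)] at hcnt
      have hβp : cntGE b β ≤ cntGT b p := cntGE_le_cntGT b hβ
      by_cases hβx : β ≤ x
      · rw [if_pos hβx] at hcnt
        omega
      · push_neg at hβx
        have hle : cntGE b β ≤ cntGT b x := cntGE_le_cntGT b hβx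
        rw [if_neg (not_le.mpr hβx)] at hcnt
        omega
    · -- lower below p
      intro β hβ htr
      set b' := Function.update b i β with hb'
      have hb'i : b' i = β := Function.update_self i β b
      have hβx : β < x := lt_of_lt_of_le hβ hpx
      have hts' : tradeSize s b' = q := by
        unfold tradeSize
        apply filter_range_card _ hqm
        · intro j hj
          have hjB : j < nB := by omega
          have hanti : cntGE b p ≤ cntGE b (sVal s j) := cntGE_anti b (hsj j hj)
          rw [le_bVal_iff b' hjB]
          have hcnt := cntGE_update b i β (sVal s j)
          rw [← hb'] at hcnt
          by_cases hsx : sVal s j ≤ x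
          · rw [if_pos hsx] at hcnt
            by_cases hsβ : sVal s j ≤ β
            · rw [if_pos hsβ] at hcnt; omega
            · rw [if_neg hsβ] at hcnt; omega
          · exact absurd (le_trans (hsj j hj) hpx) hsx
        · intro j hjq hjm
          have hjB : j < nB := by omega
          have hcb : cntGE b (sVal s j) ≤ j := cnt_le_of_not_trade s b hjB hjq hjm
          rw [le_bVal_iff b' hjB]
          have hcnt := cntGE_update b i β (sVal s j)
          rw [← hb'] at hcnt
          by_cases hsβ : sVal s j ≤ β
          · have hsx : sVal s j ≤ x := le_trans hsβ (le_of_lt hβx)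
            rw [if_pos hsx, if_pos hsβ] at hcnt; omega
          · rw [if_neg hsβ] at hcnt
            by_cases hsx : sVal s j ≤ x
            · rw [if_pos hsx] at hcnt; omega
            · rw [if_neg hsx] at hcnt; omega
      -- rank lower bound : buyerRank b' i ≥ q
      have hr' : cntGT b' (b' i) ≤ buyerRank b' i := cntGT_le_rank b' i
      rw [hb'i] at hr'
      have hcnt := cntGT_update b i β β
      rw [← hb'] at hcnt
      rw [if_pos hβx, if_neg (lt_irrefl β)] at hcnt
      have hge : cntGE b p ≤ cntGT b β := cntGE_le_cntGT b hβ
      rw [buyerTrades] at htr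
      by_cases hc' : tradeSize s b' < nB
          ∧ sVal s (tradeSize s b' - 1) ≤ bVal b' (tradeSize s b')
      · rw [if_pos hc', hts'] at htr
        omega
      · rw [if_neg hc', hts'] at htr
        omega
  · -- CASE 2
    rintro hcond i hri
    set q := tradeSize s b with hq
    have hq2 : 2 ≤ q := by omega
    have hq1B : q - 1 < nB := by omega
    set x := b i with hx
    have hrx : cntGT b x ≤ buyerRank b i := cntGT_le_rank b i
    have hxq : cntGT b x ≤ q - 2 := by omega
    set p := bVal b (q - 1) with hp
    have hpx : p ≤ x := by
      by_contra h
      push_neg at h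
      have := (lt_bVal_iff b hq1B x).mp h
      omega
    have hcntp : q ≤ cntGE b p := by
      have := (le_bVal_iff b hq1B p).mp le_rfl
      omega
    have hcntp' : cntGT b p ≤ q - 1 := by
      by_contra h
      push_neg at h
      exact absurd ((lt_bVal_iff b hq1B p).mpr (by omega)) (lt_irrefl p)
    have hsj : ∀ j < q, sVal s j ≤ p := by
      intro j hj
      exact le_trans (sVal_mono s (by omega) (by omega))
        (tradeSize_spec_lt s b (q-1) (by omega))
    refine ⟨?_, ?_, ?_⟩
    · rw [buyerTrades, if_neg hcond]
      exact hri
    · -- raise above p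
      intro β hβ
      set b' := Function.update b i β with hb'
      have hb'i : b' i = β := Function.update_self i β b
      have hts' : tradeSize s b' = q := by
        unfold tradeSize
        apply filter_range_card _ hqm
        · intro j hj
          have hjB : j < nB := by omega
          have hsx : sVal s j ≤ x := le_trans (hsj j hj) hpx
          have hsβ : sVal s j ≤ β := le_of_lt (lt_of_le_of_lt (hsj j hj) hβ)
          have hcnt := cntGE_update b i β (sVal s j)
          rw [← hb'] at hcnt
          have hPj := (le_bVal_iff b hjB (sVal s j)).mp (tradeSize_spec_lt s b j hj)
          rw [le_bVal_iff b' hjB]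
          rw [if_pos hsx, if_pos hsβ] at hcnt
          omega
        · intro j hjq hjm
          have hjB : j < nB := by omega
          have hcb : cntGE b (sVal s j) ≤ j := cnt_le_of_not_trade s b hjB hjq hjm
          rw [le_bVal_iff b' hjB]
          have hcnt := cntGE_update b i β (sVal s j)
          rw [← hb'] at hcnt
          by_cases hsx : sVal s j ≤ x
          · rw [if_pos hsx] at hcnt
            by_cases hsβ : sVal s j ≤ β
            · rw [if_pos hsβ] at hcnt; omega
            · rw [if_neg hsβ] at hcnt; omega
          · push_neg at hsx
            have hle : cntGE b (sVal s j) ≤ cntGT b x := cntGE_le_cntGT b hsx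
            rw [if_neg (not_le.mpr hsx)] at hcnt
            by_cases hsβ : sVal s j ≤ β
            · rw [if_pos hsβ] at hcnt; omega
            · rw [if_neg hsβ] at hcnt; omega
      -- rank bound : buyerRank b' i < q - 1
      have hr' : buyerRank b' i < cntGE b' (b' i) := rank_lt_cntGE b' i
      rw [hb'i] at hr'
      have hcnt := cntGE_update b i β β
      rw [← hb'] at hcnt
      rw [if_pos (le_refl β)] at hcnt
      have hβp : cntGE b β ≤ cntGT b p := cntGE_le_cntGT b hβ
      have hrq : buyerRank b' i < q - 1 := by
        by_cases hβx : β ≤ x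
        · rw [if_pos hβx] at hcnt
          omega
        · push_neg at hβx
          have hle : cntGE b β ≤ cntGT b x := cntGE_le_cntGT b hβx
          rw [if_neg (not_le.mpr hβx)] at hcnt
          omega
      rw [buyerTrades]
      by_cases hc' : tradeSize s b' < nB
          ∧ sVal s (tradeSize s b' - 1) ≤ bVal b' (tradeSize s b')
      · rw [if_pos hc', hts']
        omega
      · rw [if_neg hc', hts']
        omega
    · -- lower below p
      intro β hβ htr
      set b' := Function.update b i β with hb'
      have hb'i : b' i = β := Function.update_self i β b
      have hβx : β < x := lt_of_lt_of_le hβ hpx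
      -- upper bound : tradeSize s b' ≤ q
      have hub : tradeSize s b' ≤ q := by
        rw [hq]
        unfold tradeSize
        apply Finset.card_le_card
        intro j hj
        simp only [Finset.mem_filter, Finset.mem_range] at hj ⊢
        obtain ⟨hjm, hPj⟩ := hj
        have hjB : j < nB := by omega
        refine ⟨hjm, ?_⟩
        have hP'j := (le_bVal_iff b' hjB (sVal s j)).mp hPj
        rw [le_bVal_iff b hjB]
        have hcnt := cntGE_update b i β (sVal s j)
        rw [← hb'] at hcnt
        by_cases hsβ : sVal s j ≤ β
        · have hsx : sVal s j ≤ x := le_trans hsβ (le_of_lt hβx)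
          rw [if_pos hsx, if_pos hsβ] at hcnt; omega
        · rw [if_neg hsβ] at hcnt
          by_cases hsx : sVal s j ≤ x
          · rw [if_pos hsx] at hcnt; omega
          · rw [if_neg hsx] at hcnt; omega
      -- lower bound : q - 1 ≤ tradeSize s b'
      have hlb : q - 1 ≤ tradeSize s b' := by
        unfold tradeSize
        calc q - 1 = (Finset.range (q-1)).card := (Finset.card_range _).symm
          _ ≤ _ := by
            apply Finset.card_le_card
            intro j hj
            simp only [Finset.mem_filter, Finset.mem_range] at hj ⊢
            have hjB : j < nB := by omega
            refine ⟨by omega, ?_⟩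
            rw [le_bVal_iff b' hjB]
            have hanti : cntGE b p ≤ cntGE b (sVal s j) := cntGE_anti b (hsj j (by omega))
            have hcnt := cntGE_update b i β (sVal s j)
            rw [← hb'] at hcnt
            by_cases hsβ : sVal s j ≤ β
            · have hsx : sVal s j ≤ x := le_trans hsβ (le_of_lt hβx)
              rw [if_pos hsx, if_pos hsβ] at hcnt; omega
            · rw [if_neg hsβ] at hcnt
              by_cases hsx : sVal s j ≤ x
              · rw [if_pos hsx] at hcnt; omega
              · rw [if_neg hsx] at hcnt; omega
      -- rank lower bound : buyerRank b' i ≥ q - 1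
      have hr' : cntGT b' (b' i) ≤ buyerRank b' i := cntGT_le_rank b' i
      rw [hb'i] at hr'
      have hcnt := cntGT_update b i β β
      rw [← hb'] at hcnt
      rw [if_pos hβx, if_neg (lt_irrefl β)] at hcnt
      have hge : cntGE b p ≤ cntGT b β := cntGE_le_cntGT b hβ
      have hrq : q - 1 ≤ buyerRank b' i := by omega
      rw [buyerTrades] at htr
      by_cases hc' : tradeSize s b' < nB
          ∧ sVal s (tradeSize s b' - 1) ≤ bVal b' (tradeSize s b')
      · rw [if_pos hc'] at htr
        -- htr : buyerRank b' i < tradeSize s b'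
        have hq' : tradeSize s b' = q := by omega
        -- show contradiction: condition hc' cannot hold when tradeSize s b' = q
        rw [hq'] at hc' htr
        obtain ⟨hqnB, hcv'⟩ := hc'
        have hqnB' : q < nB := hqnB
        have hnP : ¬ (sVal s (q-1) ≤ bVal b q) := fun h => hcond ⟨hqnB', h⟩
        have hcb : cntGE b (sVal s (q-1)) ≤ q := by
          by_contra h
          push_neg at h
          exact hnP ((le_bVal_iff b hqnB' _).mpr h)
        have hcv'' := (le_bVal_iff b' hqnB' _).mp hcv'
        have hcnt2 := cntGE_update b i β (sVal s (q-1))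
        rw [← hb'] at hcnt2
        by_cases hsβ : sVal s (q-1) ≤ β
        · have hsx : sVal s (q-1) ≤ x := le_trans hsβ (le_of_lt hβx)
          rw [if_pos hsx, if_pos hsβ] at hcnt2; omega
        · rw [if_neg hsβ] at hcnt2
          by_cases hsx : sVal s (q-1) ≤ x
          · rw [if_pos hsx] at hcnt2; omega
          · rw [if_neg hsx] at hcnt2; omega
      · rw [if_neg hc'] at htr
        omega
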